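/- Let X ⊆ PG(N, 2) span PG(N, 2), N > 2, with a family Ξ of planes each meeting X in a conic (= frame of a plane over F₂, i.e. 3 points no two on a common line of X), such that (MM1) any two points of X lie in a member of Ξ and (MM2*) any two distinct members of Ξ meet in exactly one point of X. Then |X| = 7 and N ≤ 6; moreover N ≠ 4. -/

import Mathlib

private lemma fano_aux_sum_ne {V : Type*} [AddCommGroup V] [Module (ZMod 2) V]
    {a b c : V} (h : LinearIndependent (ZMod 2) ![a, b, c]) : a + b + c ≠ 0 := by
  intro h0
  have h1 := Fintype.linearIndependent_iff.mp h ![1, 1, 1]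
    (by simpa [Fin.sum_univ_three] using h0) 0
  simp at h1

private lemma fano_aux_ne {V : Type*} [AddCommGroup V] [Module (ZMod 2) V]
    {a b c : V} (h : LinearIndependent (ZMod 2) ![a, b, c]) :
    a ≠ b ∧ a ≠ c ∧ b ≠ c := by
  haveI : Fact (Nat.Prime 2) := ⟨by norm_num⟩
  have hinj := h.injective
  refine ⟨fun e => ?_, fun e => ?_, fun e => ?_⟩
  · have := hinj (show ![a,b,c] 0 = ![a,b,c] 1 by simpa using e); simp at this
  · have := hinj (show ![a,b,c] 0 = ![a,b,c] 2 by simpa using e); simp at this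
  · have := hinj (show ![a,b,c] 1 = ![a,b,c] 2 by simpa using e); simp at this

private lemma fano_aux_sum3 {V : Type*} [AddCommGroup V] [Module (ZMod 2) V]
    {a b c u v w : V} (h : LinearIndependent (ZMod 2) ![a, b, c])
    (hu : u ∈ ({a, b, c} : Set V)) (hv : v ∈ ({a, b, c} : Set V))
    (hw : w ∈ ({a, b, c} : Set V))
    (huv : u ≠ v) (huw : u ≠ w) (hvw : v ≠ w) : u + v + w ≠ 0 := by
  have habc := fano_aux_sum_ne h
  simp only [Set.mem_insert_iff, Set.mem_singleton_iff] at hu hv hw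
  rcases hu with rfl | rfl | rfl <;> rcases hv with rfl | rfl | rfl <;>
    rcases hw with rfl | rfl | rfl <;>
    first
      | (intro h0; refine habc ?_; abel_nf at h0 ⊢; exact h0)
      | simp_all

private lemma fano_aux_ne7 {V : Type*} [AddCommGroup V]
    {p a b c d e f : V}
    (h1 : p ≠ a) (h2 : p ≠ b) (h3 : p ≠ c) (h4 : p ≠ d) (h5 : p ≠ e) (h6 : p ≠ f)
    (h7 : a ≠ b) (h8 : a ≠ c) (h9 : a ≠ d) (h10 : a ≠ e) (h11 : a ≠ f)
    (h12 : b ≠ c) (h13 : b ≠ d) (h14 : b ≠ e) (h15 : b ≠ f)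
    (h16 : c ≠ d) (h17 : c ≠ e) (h18 : c ≠ f)
    (h19 : d ≠ e) (h20 : d ≠ f) (h21 : e ≠ f) :
    ∀ i j : Fin 7, i ≠ j → ![p, a, b, c, d, e, f] i ≠ ![p, a, b, c, d, e, f] j := by
  intro i j hij
  fin_cases i <;> fin_cases j <;>
    first
    | exact absurd rfl hij
    | exact h1 | exact h1.symm | exact h2 | exact h2.symm | exact h3 | exact h3.symm
    | exact h4 | exact h4.symm | exact h5 | exact h5.symm | exact h6 | exact h6.symm
    | exact h7 | exact h7.symm | exact h8 | exact h8.symm | exact h9 | exact h9.symm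
    | exact h10 | exact h10.symm | exact h11 | exact h11.symm | exact h12 | exact h12.symm
    | exact h13 | exact h13.symm | exact h14 | exact h14.symm | exact h15 | exact h15.symm
    | exact h16 | exact h16.symm | exact h17 | exact h17.symm | exact h18 | exact h18.symm
    | exact h19 | exact h19.symm | exact h20 | exact h20.symm | exact h21 | exact h21.symm

private lemma fano_range7 {V : Type*} (p a b c d e f : V) :
    Set.range ![p, a, b, c, d, e, f] = {p, a, b, c, d, e, f} := by
  ext u
  simp only [Matrix.range_cons, Matrix.range_empty, Set.union_empty, Set.singleton_union,
    Set.mem_insert_iff, Set.mem_singleton_iff]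

private lemma fano_zmod_one : ∀ z : ZMod 2, z ≠ 0 → z = 1 := by decide
private lemma fano_zmod_add : ∀ z w : ZMod 2, z + w = 0 → z = w := by decide
private lemma fano_zmod_add3 : ∀ z w : ZMod 2, z ≠ 0 → w ≠ 0 → z + w ≠ 0 → False := by decide

/-- Let `X` span `PG(N, 2)` (`N > 2`), modelled as the nonzero vectors of an
`(N+1)`-dimensional `F₂`-vector space, with a family `Ξ` of planes (3-dimensional linear
subspaces) each meeting `X` in a conic (3 linearly independent points), satisfying (MM1)
(any two points of `X` lie in a member of `Ξ`) and (MM2*) (any two distinct members of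
`Ξ` meet in exactly one point of `X`). Then `|X| = 7`, `N ≤ 6`, and `N ≠ 4`. -/
theorem fano_veronese_card_and_dim
    (N : ℕ) (hN : 2 < N)
    (V : Type*) [AddCommGroup V] [Module (ZMod 2) V]
    (hdim : Module.finrank (ZMod 2) V = N + 1)
    (X : Set V) (hX0 : (0 : V) ∉ X)
    (hspan : Submodule.span (ZMod 2) X = ⊤)
    (Ξ : Set (Submodule (ZMod 2) V)) (hΞ : Ξ.Nontrivial)
    (hplane : ∀ ξ ∈ Ξ, Module.finrank (ZMod 2) ξ = 3)
    (hconic : ∀ ξ ∈ Ξ, ∃ a b c : V, a ∈ X ∧ b ∈ X ∧ c ∈ X ∧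
        X ∩ (ξ : Set V) = {a, b, c} ∧ LinearIndependent (ZMod 2) ![a, b, c])
    (hMM1 : ∀ x ∈ X, ∀ y ∈ X, x ≠ y → ∃ ξ ∈ Ξ, x ∈ ξ ∧ y ∈ ξ)
    (hMM2 : ∀ ξ₁ ∈ Ξ, ∀ ξ₂ ∈ Ξ, ξ₁ ≠ ξ₂ →
        ∃ x ∈ X, ((ξ₁ ⊓ ξ₂ : Submodule (ZMod 2) V) : Set V) = {0, x}) :
    X.ncard = 7 ∧ N ≤ 6 ∧ N ≠ 4 := by
  classical
  haveI : Fact (Nat.Prime 2) := ⟨by norm_num⟩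
  haveI : FiniteDimensional (ZMod 2) V := FiniteDimensional.of_finrank_pos (by omega)
  -- basic facts
  have hXne : ∀ x ∈ X, x ≠ 0 := fun x hx h => hX0 (h ▸ hx)
  have hvv : ∀ x : V, x + x = 0 := by
    intro x
    rw [← two_smul (ZMod 2) x, show (2 : ZMod 2) = 0 from rfl, zero_smul]
  have hadd : ∀ x y : V, x + y = 0 → x = y := by
    intro x y h
    rw [← add_zero x, ← hvv y, ← add_assoc, h, zero_add]
  -- the unique common point of two distinct planes
  have common : ∀ ξ₁ ∈ Ξ, ∀ ξ₂ ∈ Ξ, ξ₁ ≠ ξ₂ → ∃ t, t ∈ X ∧ t ∈ ξ₁ ∧ t ∈ ξ₂ ∧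
      ∀ y : V, y ∈ ξ₁ → y ∈ ξ₂ → y ≠ 0 → y = t := by
    intro ξ₁ h₁ ξ₂ h₂ hne
    obtain ⟨t, htX, hset⟩ := hMM2 ξ₁ h₁ ξ₂ h₂ hne
    have htm : t ∈ ((ξ₁ ⊓ ξ₂ : Submodule (ZMod 2) V) : Set V) := by
      rw [hset]; right; rfl
    rw [SetLike.mem_coe, Submodule.mem_inf] at htm
    refine ⟨t, htX, htm.1, htm.2, ?_⟩
    intro y hy1 hy2 hy0
    have : y ∈ ((ξ₁ ⊓ ξ₂ : Submodule (ZMod 2) V) : Set V) := by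
      rw [SetLike.mem_coe, Submodule.mem_inf]; exact ⟨hy1, hy2⟩
    rw [hset] at this
    rcases this with h | h
    · exact absurd h hy0
    · exact h
  -- a plane through two distinct points of X is unique
  have unique_line : ∀ x ∈ X, ∀ y ∈ X, x ≠ y → ∀ ξ₁ ∈ Ξ, ∀ ξ₂ ∈ Ξ,
      x ∈ ξ₁ → y ∈ ξ₁ → x ∈ ξ₂ → y ∈ ξ₂ → ξ₁ = ξ₂ := by
    intro x hx y hy hxy ξ₁ h₁ ξ₂ h₂ hx1 hy1 hx2 hy2
    by_contra hne
    obtain ⟨t, -, -, -, ht⟩ := common ξ₁ h₁ ξ₂ h₂ hne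
    exact hxy ((ht x hx1 hx2 (hXne x hx)).trans (ht y hy1 hy2 (hXne y hy)).symm)
  -- a second point of X in a plane, different from a given point
  have second : ∀ ξ ∈ Ξ, ∀ p : V, ∃ q, q ∈ X ∧ q ∈ ξ ∧ q ≠ p := by
    intro ξ hξ p
    obtain ⟨a, b, c, ha, hb, hc, hset, hli⟩ := hconic ξ hξ
    have haξ : a ∈ ξ := by
      have : a ∈ X ∩ (ξ : Set V) := by rw [hset]; left; rfl
      exact this.2
    have hbξ : b ∈ ξ := by
      have : b ∈ X ∩ (ξ : Set V) := by rw [hset]; right; left; rfl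
      exact this.2
    obtain ⟨hab, -, -⟩ := fano_aux_ne hli
    by_cases hpa : a = p
    · exact ⟨b, hb, hbξ, fun h => hab (by rw [hpa, ← h])⟩
    · exact ⟨a, ha, haξ, hpa⟩
  -- the third point of X in a plane through two given points
  have third : ∀ ξ ∈ Ξ, ∀ x ∈ X, ∀ y ∈ X, x ∈ ξ → y ∈ ξ → x ≠ y →
      ∃ z, z ∈ X ∧ z ∈ ξ ∧ z ≠ x ∧ z ≠ y ∧ X ∩ (ξ : Set V) = {x, y, z} := by
    intro ξ hξ x hx y hy hxξ hyξ hxy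
    obtain ⟨a, b, c, ha, hb, hc, hset, hli⟩ := hconic ξ hξ
    obtain ⟨hab, hac, hbc⟩ := fano_aux_ne hli
    have hmem : ∀ u, u ∈ ({a, b, c} : Set V) → u ∈ X ∧ u ∈ ξ := by
      intro u hu
      have : u ∈ X ∩ (ξ : Set V) := hset ▸ hu
      exact ⟨this.1, this.2⟩
    have haξ := (hmem a (by left; rfl)).2
    have hbξ := (hmem b (by right; left; rfl)).2
    have hcξ := (hmem c (by right; right; rfl)).2
    have hxm : x ∈ ({a, b, c} : Set V) := hset ▸ Set.mem_inter hx hxξ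
    have hym : y ∈ ({a, b, c} : Set V) := hset ▸ Set.mem_inter hy hyξ
    simp only [Set.mem_insert_iff, Set.mem_singleton_iff] at hxm hym
    have perm : ∀ u v w : V, ({a, b, c} : Set V) = {u, v, w} →
        X ∩ (ξ : Set V) = {u, v, w} := fun u v w h => hset.trans h
    rcases hxm with rfl | rfl | rfl <;> rcases hym with rfl | rfl | rfl
    · exact absurd rfl hxy
    · exact ⟨c, hc, hcξ, hac.symm, hbc.symm, perm _ _ _ rfl⟩
    · exact ⟨b, hb, hbξ, hab.symm, hbc, perm _ _ _ (by ext u; simp only [Set.mem_insert_iff, Set.mem_singleton_iff]; tauto)⟩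
    · exact ⟨c, hc, hcξ, hbc.symm, hac.symm, perm _ _ _ (by ext u; simp only [Set.mem_insert_iff, Set.mem_singleton_iff]; tauto)⟩
    · exact absurd rfl hxy
    · exact ⟨a, ha, haξ, hab, hac, perm _ _ _ (by ext u; simp only [Set.mem_insert_iff, Set.mem_singleton_iff]; tauto)⟩
    · exact ⟨b, hb, hbξ, hbc, hab.symm, perm _ _ _ (by ext u; simp only [Set.mem_insert_iff, Set.mem_singleton_iff]; tauto)⟩
    · exact ⟨a, ha, haξ, hac, hab, perm _ _ _ (by ext u; simp only [Set.mem_insert_iff, Set.mem_singleton_iff]; tauto)⟩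
    · exact absurd rfl hxy
  -- no three distinct points of X sum to zero
  have noSum3 : ∀ x ∈ X, ∀ y ∈ X, ∀ z ∈ X, x ≠ y → x ≠ z → y ≠ z →
      x + y + z ≠ 0 := by
    intro x hx y hy z hz hxy hxz hyz h0
    obtain ⟨ξ, hξ, hxξ, hyξ⟩ := hMM1 x hx y hy hxy
    have hzxy : x + y = z := hadd _ _ h0
    have hzξ : z ∈ ξ := hzxy ▸ add_mem hxξ hyξ
    obtain ⟨a, b, c, ha, hb, hc, hset, hli⟩ := hconic ξ hξ
    exact fano_aux_sum3 hli (hset ▸ Set.mem_inter hx hxξ)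
      (hset ▸ Set.mem_inter hy hyξ) (hset ▸ Set.mem_inter hz hzξ) hxy hxz hyz h0
  -- no four distinct points of X sum to zero
  have noSum4 : ∀ x ∈ X, ∀ y ∈ X, ∀ z ∈ X, ∀ w ∈ X, x ≠ y → x ≠ z → x ≠ w →
      y ≠ z → y ≠ w → z ≠ w → x + y + z + w ≠ 0 := by
    intro x hx y hy z hz w hw hxy hxz hxw hyz hyw hzw h0
    obtain ⟨ξ, hξ, hxξ, hyξ⟩ := hMM1 x hx y hy hxy
    obtain ⟨ξ', hξ', hzξ', hwξ'⟩ := hMM1 z hz w hw hzw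
    have hsum : x + y = z + w := by
      apply hadd
      rw [← h0]; abel
    by_cases heq : ξ = ξ'
    · subst heq
      obtain ⟨a, b, c, ha, hb, hc, hset, hli⟩ := hconic ξ hξ
      have hx' : x ∈ ({a, b, c} : Set V) := hset ▸ Set.mem_inter hx hxξ
      have hy' : y ∈ ({a, b, c} : Set V) := hset ▸ Set.mem_inter hy hyξ
      have hz' : z ∈ ({a, b, c} : Set V) := hset ▸ Set.mem_inter hz hzξ'
      have hw' : w ∈ ({a, b, c} : Set V) := hset ▸ Set.mem_inter hw hwξ'
      simp only [Set.mem_insert_iff, Set.mem_singleton_iff] at hx' hy' hz' hw'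
      rcases hx' with rfl | rfl | rfl <;> rcases hy' with rfl | rfl | rfl <;>
        rcases hz' with rfl | rfl | rfl <;> rcases hw' with rfl | rfl | rfl <;>
        first
          | exact absurd rfl hxy | exact absurd rfl hxz | exact absurd rfl hxw
          | exact absurd rfl hyz | exact absurd rfl hyw | exact absurd rfl hzw
    · obtain ⟨t, htX, htξ, -, ht⟩ := common ξ hξ ξ' hξ' heq
      have hs0 : x + y ≠ 0 := fun h => hxy (hadd _ _ h)
      have hst : x + y = t :=
        ht _ (add_mem hxξ hyξ) (hsum ▸ add_mem hzξ' hwξ') hs0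
      have htx : t ≠ x := by
        intro h
        rw [h] at hst
        have : x + (x + y) = x + x := by rw [hst]
        rw [← add_assoc, hvv, zero_add] at this
        exact hXne y hy this
      have hty : t ≠ y := by
        intro h
        rw [h] at hst
        have : (x + y) + y = y + y := by rw [hst]
        rw [add_assoc, hvv, add_zero] at this
        exact hXne x hx this
      refine noSum3 x hx y hy t htX hxy (Ne.symm htx) (Ne.symm hty) ?_
      rw [hst]; exact hvv t
  -- ### Construct the seven points of X
  obtain ⟨ξ₁, hξ₁, ξ₂, hξ₂, h12⟩ := hΞ
  obtain ⟨p, hpX, hp1, hp2, hpu⟩ := common ξ₁ hξ₁ ξ₂ hξ₂ h12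
  obtain ⟨a, haX, ha1, hap⟩ := second ξ₁ hξ₁ p
  obtain ⟨b, hbX, hb1, hbp, hba, hblock1⟩ :=
    third ξ₁ hξ₁ p hpX a haX hp1 ha1 (Ne.symm hap)
  obtain ⟨c, hcX, hc2, hcp⟩ := second ξ₂ hξ₂ p
  obtain ⟨d, hdX, hd2, hdp, hdc, hblock2⟩ :=
    third ξ₂ hξ₂ p hpX c hcX hp2 hc2 (Ne.symm hcp)
  have hnot2 : ∀ u, u ∈ X → u ∈ ξ₁ → u ≠ p → u ∉ ξ₂ :=
    fun u huX hu1 hup hu2 => hup (hpu u hu1 hu2 (hXne u huX))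
  have hnot1 : ∀ u, u ∈ X → u ∈ ξ₂ → u ≠ p → u ∉ ξ₁ :=
    fun u huX hu2 hup hu1 => hup (hpu u hu1 hu2 (hXne u huX))
  have ha2 : a ∉ ξ₂ := hnot2 a haX ha1 hap
  have hb2 : b ∉ ξ₂ := hnot2 b hbX hb1 hbp
  have hc1 : c ∉ ξ₁ := hnot1 c hcX hc2 hcp
  have hd1 : d ∉ ξ₁ := hnot1 d hdX hd2 hdp
  have hac : a ≠ c := fun h => ha2 (h ▸ hc2)
  have had : a ≠ d := fun h => ha2 (h ▸ hd2)
  have hbc : b ≠ c := fun h => hb2 (h ▸ hc2)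
  have hbd : b ≠ d := fun h => hb2 (h ▸ hd2)
  -- the plane through a and c
  obtain ⟨ξM, hξM, haM, hcM⟩ := hMM1 a haX c hcX hac
  have hξM1 : ξM ≠ ξ₁ := fun h => hc1 (h ▸ hcM)
  have hξM2 : ξM ≠ ξ₂ := fun h => ha2 (h ▸ haM)
  have hpM : p ∉ ξM := fun h =>
    hξM1 (unique_line p hpX a haX (Ne.symm hap) ξM hξM ξ₁ hξ₁ h haM hp1 ha1)
  obtain ⟨e, heX, heM, hea, hec, hblockM⟩ :=
    third ξM hξM a haX c hcX haM hcM hac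
  have hep : e ≠ p := fun h => hpM (h ▸ heM)
  -- the third plane through p
  obtain ⟨ξ₃, hξ₃, hp3, he3⟩ := hMM1 p hpX e heX (Ne.symm hep)
  have h31 : ξ₃ ≠ ξ₁ := by
    intro h
    have he1 : e ∈ ξ₁ := h ▸ he3
    exact hpM
      ((unique_line a haX e heX (Ne.symm hea) ξ₁ hξ₁ ξM hξM ha1 he1 haM heM) ▸ hp1)
  have h32 : ξ₃ ≠ ξ₂ := by
    intro h
    have he2 : e ∈ ξ₂ := h ▸ he3
    exact hpM
      ((unique_line c hcX e heX (Ne.symm hec) ξ₂ hξ₂ ξM hξM hc2 he2 hcM heM) ▸ hp2)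
  obtain ⟨f, hfX, hf3, hfp, hfe, hblock3⟩ :=
    third ξ₃ hξ₃ p hpX e heX hp3 he3 (Ne.symm hep)
  have hnot31 : ∀ u, u ∈ X → u ∈ ξ₁ → u ≠ p → u ∉ ξ₃ := by
    intro u huX hu1 hup hu3
    exact h31 (unique_line p hpX u huX (Ne.symm hup) ξ₃ hξ₃ ξ₁ hξ₁ hp3 hu3 hp1 hu1)
  have hnot32 : ∀ u, u ∈ X → u ∈ ξ₂ → u ≠ p → u ∉ ξ₃ := by
    intro u huX hu2 hup hu3
    exact h32 (unique_line p hpX u huX (Ne.symm hup) ξ₃ hξ₃ ξ₂ hξ₂ hp3 hu3 hp2 hu2)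
  have ha3 : a ∉ ξ₃ := hnot31 a haX ha1 hap
  have hb3 : b ∉ ξ₃ := hnot31 b hbX hb1 hbp
  have hc3 : c ∉ ξ₃ := hnot32 c hcX hc2 hcp
  have hd3 : d ∉ ξ₃ := hnot32 d hdX hd2 hdp
  have hae : a ≠ e := Ne.symm hea
  have haf : a ≠ f := fun h => ha3 (h ▸ hf3)
  have hbe : b ≠ e := fun h => hb3 (h ▸ he3)
  have hbf : b ≠ f := fun h => hb3 (h ▸ hf3)
  have hce : c ≠ e := Ne.symm hec
  have hcf : c ≠ f := fun h => hc3 (h ▸ hf3)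
  have hde : d ≠ e := fun h => hd3 (h ▸ he3)
  have hdf : d ≠ f := fun h => hd3 (h ▸ hf3)
  -- X is covered by the three planes through p
  have hcover : X ⊆ {p, a, b, c, d, e, f} := by
    intro y hy
    by_cases hyp : y = p
    · exact Or.inl hyp
    obtain ⟨L, hL, hpL, hyL⟩ := hMM1 p hpX y hy (Ne.symm hyp)
    have hLM : L ≠ ξM := fun h => hpM (h ▸ hpL)
    obtain ⟨t, htX, htL, htM, htu⟩ := common L hL ξM hξM hLM
    have htm : t ∈ ({a, c, e} : Set V) := hblockM ▸ Set.mem_inter htX htM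
    simp only [Set.mem_insert_iff, Set.mem_singleton_iff] at htm
    rcases htm with h | h | h
    · have hE : L = ξ₁ :=
        unique_line p hpX a haX (Ne.symm hap) L hL ξ₁ hξ₁ hpL (h ▸ htL) hp1 ha1
      have hy1 : y ∈ X ∩ (ξ₁ : Set V) := ⟨hy, hE ▸ hyL⟩
      rw [hblock1] at hy1
      simp only [Set.mem_insert_iff, Set.mem_singleton_iff] at hy1
      rcases hy1 with rfl | rfl | rfl <;> simp
    · have hE : L = ξ₂ :=
        unique_line p hpX c hcX (Ne.symm hcp) L hL ξ₂ hξ₂ hpL (h ▸ htL) hp2 hc2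
      have hy2 : y ∈ X ∩ (ξ₂ : Set V) := ⟨hy, hE ▸ hyL⟩
      rw [hblock2] at hy2
      simp only [Set.mem_insert_iff, Set.mem_singleton_iff] at hy2
      rcases hy2 with rfl | rfl | rfl <;> simp
    · have hE : L = ξ₃ :=
        unique_line p hpX e heX (Ne.symm hep) L hL ξ₃ hξ₃ hpL (h ▸ htL) hp3 he3
      have hy3 : y ∈ X ∩ (ξ₃ : Set V) := ⟨hy, hE ▸ hyL⟩
      rw [hblock3] at hy3
      simp only [Set.mem_insert_iff, Set.mem_singleton_iff] at hy3
      rcases hy3 with rfl | rfl | rfl <;> simp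
  have hXeq : X = {p, a, b, c, d, e, f} := by
    apply Set.eq_of_subset_of_subset hcover
    intro y hy
    simp only [Set.mem_insert_iff, Set.mem_singleton_iff] at hy
    rcases hy with rfl | rfl | rfl | rfl | rfl | rfl | rfl <;> assumption
  -- the seven points as a Finset
  have m1 : p ∉ ({a, b, c, d, e, f} : Finset V) := by
    simp only [Finset.mem_insert, Finset.mem_singleton]
    push_neg
    exact ⟨Ne.symm hap, Ne.symm hbp, Ne.symm hcp, Ne.symm hdp, Ne.symm hep, Ne.symm hfp⟩
  have m2 : a ∉ ({b, c, d, e, f} : Finset V) := by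
    simp only [Finset.mem_insert, Finset.mem_singleton]
    push_neg
    exact ⟨Ne.symm hba, hac, had, hae, haf⟩
  have m3 : b ∉ ({c, d, e, f} : Finset V) := by
    simp only [Finset.mem_insert, Finset.mem_singleton]
    push_neg
    exact ⟨hbc, hbd, hbe, hbf⟩
  have m4 : c ∉ ({d, e, f} : Finset V) := by
    simp only [Finset.mem_insert, Finset.mem_singleton]
    push_neg
    exact ⟨Ne.symm hdc, hce, hcf⟩
  have m5 : d ∉ ({e, f} : Finset V) := by
    simp only [Finset.mem_insert, Finset.mem_singleton]
    push_neg
    exact ⟨hde, hdf⟩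
  have m6 : e ∉ ({f} : Finset V) := by
    simp only [Finset.mem_singleton]
    exact Ne.symm hfe
  have hFcard : ({p, a, b, c, d, e, f} : Finset V).card = 7 := by
    rw [Finset.card_insert_of_notMem m1, Finset.card_insert_of_notMem m2,
      Finset.card_insert_of_notMem m3, Finset.card_insert_of_notMem m4,
      Finset.card_insert_of_notMem m5, Finset.card_insert_of_notMem m6,
      Finset.card_singleton]
  have hXF : X = (({p, a, b, c, d, e, f} : Finset V) : Set V) := by
    rw [hXeq]; simp only [Finset.coe_insert, Finset.coe_singleton]
  have hcard : X.ncard = 7 := by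
    rw [hXF, Set.ncard_coe_finset, hFcard]
  -- the dimension bound
  have hrank7 : Module.finrank (ZMod 2) V ≤ 7 := by
    have h := finrank_span_finset_le_card (R := ZMod 2) ({p, a, b, c, d, e, f} : Finset V)
    rw [hFcard] at h
    rw [Set.finrank, ← hXF, hspan, finrank_top] at h
    exact h
  refine ⟨hcard, by omega, ?_⟩
  -- ### N ≠ 4
  intro h4
  have h5 : Module.finrank (ZMod 2) V = 5 := by omega
  obtain ⟨v, hv⟩ : ∃ v : Fin 7 → V, v = ![p, a, b, c, d, e, f] := ⟨_, rfl⟩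
  have hvne : ∀ i j : Fin 7, i ≠ j → v i ≠ v j := by
    rw [hv]
    exact fano_aux_ne7 (Ne.symm hap) (Ne.symm hbp) (Ne.symm hcp) (Ne.symm hdp)
      (Ne.symm hep) (Ne.symm hfp) (Ne.symm hba) hac had hae haf hbc hbd hbe hbf
      (Ne.symm hdc) hce hcf hde hdf (Ne.symm hfe)
  have hvX : ∀ i, v i ∈ X := by
    rw [hv]
    intro i
    fin_cases i
    exacts [hpX, haX, hbX, hcX, hdX, heX, hfX]
  -- no nonempty subset of at most 4 of the points sums to zero
  have noSmall : ∀ S : Finset (Fin 7), S.Nonempty → S.card ≤ 4 →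
      ∑ i ∈ S, v i ≠ 0 := by
    intro S hSne hScard h0
    have h1' : 1 ≤ S.card := Finset.card_pos.mpr hSne
    have hc : S.card = 1 ∨ S.card = 2 ∨ S.card = 3 ∨ S.card = 4 := by omega
    rcases hc with hc | hc | hc | hc
    · obtain ⟨i, rfl⟩ := Finset.card_eq_one.mp hc
      rw [Finset.sum_singleton] at h0
      exact hXne _ (hvX i) h0
    · obtain ⟨i, j, hij, rfl⟩ := Finset.card_eq_two.mp hc
      rw [Finset.sum_pair hij] at h0
      exact hvne i j hij (hadd _ _ h0)
    · obtain ⟨i, j, k, hij, hik, hjk, rfl⟩ := Finset.card_eq_three.mp hc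
      rw [Finset.sum_insert (by simp [hij, hik]), Finset.sum_insert (by simp [hjk]),
        Finset.sum_singleton] at h0
      exact noSum3 _ (hvX i) _ (hvX j) _ (hvX k) (hvne i j hij) (hvne i k hik)
        (hvne j k hjk) (by rw [← h0]; abel)
    · obtain ⟨i, hi⟩ := hSne
      have hc3 : (S.erase i).card = 3 := by rw [Finset.card_erase_of_mem hi, hc]
      obtain ⟨j, k, l, hjk, hjl, hkl, he'⟩ := Finset.card_eq_three.mp hc3
      have hjm : j ∈ S.erase i := by rw [he']; simp
      have hkm : k ∈ S.erase i := by rw [he']; simp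
      have hlm : l ∈ S.erase i := by rw [he']; simp
      have hij : i ≠ j := Ne.symm (Finset.ne_of_mem_erase hjm)
      have hik : i ≠ k := Ne.symm (Finset.ne_of_mem_erase hkm)
      have hil : i ≠ l := Ne.symm (Finset.ne_of_mem_erase hlm)
      have hS : S = insert i ({j, k, l} : Finset (Fin 7)) := by
        rw [← he', Finset.insert_erase hi]
      rw [hS, Finset.sum_insert (by simp [hij, hik, hil]),
        Finset.sum_insert (by simp [hjk, hjl]), Finset.sum_insert (by simp [hkl]),
        Finset.sum_singleton] at h0
      exact noSum4 _ (hvX i) _ (hvX j) _ (hvX k) _ (hvX l) (hvne i j hij)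
        (hvne i k hik) (hvne i l hil) (hvne j k hjk) (hvne j l hjl) (hvne k l hkl)
        (by rw [← h0]; abel)
  -- every nonzero vector of the kernel has at most 2 zero coordinates
  have hker : ∀ g : Fin 7 → ZMod 2, ∑ i, g i • v i = 0 → g ≠ 0 →
      (Finset.univ.filter (fun i => g i = 0)).card ≤ 2 := by
    intro g hg hg0
    have hsum : ∑ i ∈ Finset.univ.filter (fun i => ¬ g i = 0), v i = 0 := by
      rw [← hg, Finset.sum_filter]
      apply Finset.sum_congr rfl
      intro i _
      by_cases h : g i = 0
      · simp [h]
      · simp [h, fano_zmod_one _ h]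
    have hne' : (Finset.univ.filter (fun i => ¬ g i = 0)).Nonempty := by
      rcases Function.ne_iff.mp hg0 with ⟨i, hi⟩
      exact ⟨i, Finset.mem_filter.mpr ⟨Finset.mem_univ i, by simpa using hi⟩⟩
    by_contra hle
    push_neg at hle
    have hsplit := Finset.card_filter_add_card_filter_not
      (s := (Finset.univ : Finset (Fin 7))) (p := fun i => g i = 0)
    have huniv : (Finset.univ : Finset (Fin 7)).card = 7 := by simp
    have hcard4 : (Finset.univ.filter (fun i => ¬ g i = 0)).card ≤ 4 := by omega
    exact noSmall _ hne' hcard4 hsum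
  -- rank-nullity: the kernel is 2-dimensional
  have hrange : LinearMap.range (Fintype.linearCombination (ZMod 2) v) = ⊤ := by
    rw [Fintype.range_linearCombination]
    have hrv : Set.range v = X := by
      rw [hv, fano_range7]
      exact hXeq.symm
    rw [hrv, hspan]
  have hkerdim : Module.finrank (ZMod 2)
      (LinearMap.ker (Fintype.linearCombination (ZMod 2) v)) = 2 := by
    have hrn := LinearMap.finrank_range_add_finrank_ker
      (Fintype.linearCombination (ZMod 2) v)
    rw [hrange, finrank_top, h5] at hrn
    have hdom : Module.finrank (ZMod 2) (Fin 7 → ZMod 2) = 7 :=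
      Module.finrank_fin_fun _
    omega
  obtain bb := Module.finBasisOfFinrankEq (ZMod 2) _ hkerdim
  have hfunadd : ∀ g h : Fin 7 → ZMod 2, g + h = 0 → g = h := by
    intro g h hgh
    funext i
    exact fano_zmod_add _ _ (congrFun hgh i)
  have hb01 : (bb 0 : Fin 7 → ZMod 2) ≠ (bb 1 : Fin 7 → ZMod 2) := by
    intro h
    have h2 : bb 0 = bb 1 := Subtype.ext h
    have := bb.injective h2
    simp at this
  have hu0 : (bb 0 : Fin 7 → ZMod 2) ≠ 0 := by
    intro h
    exact bb.ne_zero 0 (Submodule.coe_eq_zero.mp h)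
  have hw0 : (bb 1 : Fin 7 → ZMod 2) ≠ 0 := by
    intro h
    exact bb.ne_zero 1 (Submodule.coe_eq_zero.mp h)
  have hs0 : (bb 0 : Fin 7 → ZMod 2) + (bb 1 : Fin 7 → ZMod 2) ≠ 0 :=
    fun h => hb01 (hfunadd _ _ h)
  have hmem : ∀ g : Fin 7 → ZMod 2,
      g ∈ LinearMap.ker (Fintype.linearCombination (ZMod 2) v) →
      ∑ i, g i • v i = 0 := by
    intro g hg
    have := LinearMap.mem_ker.mp hg
    rwa [Fintype.linearCombination_apply] at this
  have z1 := hker _ (hmem _ (bb 0).2) hu0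
  have z2 := hker _ (hmem _ (bb 1).2) hw0
  have z3 := hker _ (hmem _ ((LinearMap.ker
      (Fintype.linearCombination (ZMod 2) v)).add_mem (bb 0).2 (bb 1).2)) hs0
  -- pigeonhole: some coordinate is nonzero in all three
  have hexi : ∃ i : Fin 7, (bb 0 : Fin 7 → ZMod 2) i ≠ 0 ∧
      (bb 1 : Fin 7 → ZMod 2) i ≠ 0 ∧
      ((bb 0 : Fin 7 → ZMod 2) + (bb 1 : Fin 7 → ZMod 2)) i ≠ 0 := by
    by_contra hcon
    push_neg at hcon
    have hsub : (Finset.univ : Finset (Fin 7)) ⊆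
        (Finset.univ.filter (fun i => (bb 0 : Fin 7 → ZMod 2) i = 0) ∪
          Finset.univ.filter (fun i => (bb 1 : Fin 7 → ZMod 2) i = 0)) ∪
          Finset.univ.filter
            (fun i => ((bb 0 : Fin 7 → ZMod 2) + (bb 1 : Fin 7 → ZMod 2)) i = 0) := by
      intro i _
      simp only [Finset.mem_union, Finset.mem_filter, Finset.mem_univ, true_and]
      by_cases h1 : (bb 0 : Fin 7 → ZMod 2) i = 0
      · exact Or.inl (Or.inl h1)
      by_cases h2 : (bb 1 : Fin 7 → ZMod 2) i = 0
      · exact Or.inl (Or.inr h2)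
      exact Or.inr (hcon i h1 h2)
    have hc7 := Finset.card_le_card hsub
    have hu1 := Finset.card_union_le
      (Finset.univ.filter (fun i => (bb 0 : Fin 7 → ZMod 2) i = 0))
      (Finset.univ.filter (fun i => (bb 1 : Fin 7 → ZMod 2) i = 0))
    have hu2 := Finset.card_union_le
      (Finset.univ.filter (fun i => (bb 0 : Fin 7 → ZMod 2) i = 0) ∪
        Finset.univ.filter (fun i => (bb 1 : Fin 7 → ZMod 2) i = 0))
      (Finset.univ.filter
        (fun i => ((bb 0 : Fin 7 → ZMod 2) + (bb 1 : Fin 7 → ZMod 2)) i = 0))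
    have huniv : (Finset.univ : Finset (Fin 7)).card = 7 := by simp
    omega
  obtain ⟨i, hi1, hi2, hi3⟩ := hexi
  exact fano_zmod_add3 _ _ hi1 hi2 hi3
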